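/- Let μ be the measure dμ = w dA on a measure space, where w : X → [0,∞) is a measurable weight. Suppose Q ⊆ X is measurable with 0 < |Q| < ∞ (Lebesgue/reference measure), and there is a constant C ≥ 1 with (∫_Q w dA)·(∫_Q w⁻¹ dA) ≤ C·|Q|² (the A₂ condition on Q, with w > 0 a.e. on Q). If E ⊆ Q is measurable with |E| ≤ δ·|Q| for some 0 < δ < 1, then μ(E) ≤ (1 - (1-δ)²/C)·μ(Q). -/

import Mathlib

open MeasureTheory

/-- Cauchy–Schwarz: `(μ univ)² ≤ (∫ w)(∫ w⁻¹)` when `w > 0` a.e. -/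
lemma cs_aux {X : Type*} [MeasurableSpace X] (μ : Measure X) (w : X → ℝ)
    (hpos : ∀ᵐ x ∂μ, 0 < w x) (h1 : Integrable w μ)
    (h2 : Integrable (fun x => (w x)⁻¹) μ) :
    (μ Set.univ).toReal ^ 2 ≤ (∫ x, w x ∂μ) * (∫ x, (w x)⁻¹ ∂μ) := by
  set f : X → ℝ := fun x => Real.sqrt (w x) with hfdef
  set g : X → ℝ := fun x => Real.sqrt (w x)⁻¹ with hgdef
  have hfm : AEStronglyMeasurable f μ :=
    Real.continuous_sqrt.comp_aestronglyMeasurable h1.aestronglyMeasurable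
  have hgm : AEStronglyMeasurable g μ :=
    Real.continuous_sqrt.comp_aestronglyMeasurable h2.aestronglyMeasurable
  have hf2 : (fun x => f x ^ 2) =ᵐ[μ] w := by
    filter_upwards [hpos] with x hx
    exact Real.sq_sqrt hx.le
  have hg2 : (fun x => g x ^ 2) =ᵐ[μ] (fun x => (w x)⁻¹) := by
    filter_upwards [hpos] with x hx
    exact Real.sq_sqrt (inv_nonneg.2 hx.le)
  have hfL : MemLp f 2 μ :=
    (memLp_two_iff_integrable_sq hfm).2 (h1.congr hf2.symm)
  have hgL : MemLp g 2 μ :=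
    (memLp_two_iff_integrable_sq hgm).2 (h2.congr hg2.symm)
  have hconj : Real.HolderConjugate 2 2 := Real.holderConjugate_iff.mpr ⟨one_lt_two, by norm_num⟩
  have hfnn : 0 ≤ᵐ[μ] f := Filter.Eventually.of_forall fun x => Real.sqrt_nonneg _
  have hgnn : 0 ≤ᵐ[μ] g := Filter.Eventually.of_forall fun x => Real.sqrt_nonneg _
  have h2e : ENNReal.ofReal (2 : ℝ) = 2 := by norm_num
  have hH := integral_mul_le_Lp_mul_Lq_of_nonneg hconj hfnn hgnn (h2e ▸ hfL) (h2e ▸ hgL)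
  have hfg : (fun x => f x * g x) =ᵐ[μ] (fun _ => (1 : ℝ)) := by
    filter_upwards [hpos] with x hx
    have h0 : Real.sqrt (w x) ≠ 0 := by positivity
    simp [hfdef, hgdef, Real.sqrt_inv, mul_inv_cancel₀ h0]
  have hleft : ∫ x, f x * g x ∂μ = (μ Set.univ).toReal := by
    rw [integral_congr_ae hfg, integral_const, smul_eq_mul, mul_one, measureReal_def]
  have hS : ∫ x, f x ^ (2 : ℝ) ∂μ = ∫ x, w x ∂μ := by
    refine integral_congr_ae ?_
    filter_upwards [hpos] with x hx
    rw [show ((2 : ℝ) = ((2 : ℕ) : ℝ)) by norm_num, Real.rpow_natCast]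
    exact Real.sq_sqrt hx.le
  have hT : ∫ x, g x ^ (2 : ℝ) ∂μ = ∫ x, (w x)⁻¹ ∂μ := by
    refine integral_congr_ae ?_
    filter_upwards [hpos] with x hx
    rw [show ((2 : ℝ) = ((2 : ℕ) : ℝ)) by norm_num, Real.rpow_natCast]
    exact Real.sq_sqrt (inv_nonneg.2 hx.le)
  rw [hleft, hS, hT] at hH
  set S := ∫ x, w x ∂μ
  set T := ∫ x, (w x)⁻¹ ∂μ
  have hS0 : 0 ≤ S := integral_nonneg_of_ae (by filter_upwards [hpos] with x hx; exact hx.le)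
  have hT0 : 0 ≤ T := integral_nonneg_of_ae
    (by filter_upwards [hpos] with x hx; exact (inv_nonneg.2 hx.le))
  have hSr : S ^ (1 / (2:ℝ)) = Real.sqrt S := (Real.sqrt_eq_rpow S).symm
  have hTr : T ^ (1 / (2:ℝ)) = Real.sqrt T := (Real.sqrt_eq_rpow T).symm
  rw [hSr, hTr] at hH
  have hμ0 : 0 ≤ (μ Set.univ).toReal := ENNReal.toReal_nonneg
  nlinarith [Real.sq_sqrt hS0, Real.sq_sqrt hT0, Real.sqrt_nonneg S, Real.sqrt_nonneg T]

/-- If `w` is a weight satisfying the `A₂` condition on `Q` with constant `C`, and `E ⊆ Q`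
with `|E| ≤ δ|Q|` for some `0 < δ < 1`, then `μ(E) ≤ (1 - (1-δ)²/C) μ(Q)` where `dμ = w dA`. -/
theorem stmt_5 {X : Type*} [MeasurableSpace X] (A : Measure X) (w : X → ℝ)
    (Q E : Set X) (C δ : ℝ)
    (hQm : MeasurableSet Q) (hEm : MeasurableSet E) (hEQ : E ⊆ Q)
    (hQpos : 0 < A Q) (hQfin : A Q < ⊤)
    (hwpos : ∀ᵐ x ∂(A.restrict Q), 0 < w x)
    (hwint : IntegrableOn w Q A)
    (hwinv : IntegrableOn (fun x => (w x)⁻¹) Q A)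
    (hC : 1 ≤ C)
    (hA2 : (∫ x in Q, w x ∂A) * (∫ x in Q, (w x)⁻¹ ∂A) ≤ C * (A Q).toReal ^ 2)
    (hδ0 : 0 < δ) (hδ1 : δ < 1)
    (hE : (A E).toReal ≤ δ * (A Q).toReal) :
    (∫ x in E, w x ∂A) ≤ (1 - (1 - δ) ^ 2 / C) * ∫ x in Q, w x ∂A := by
  classical
  set F := Q \ E with hFdef
  have hFQ : F ⊆ Q := Set.diff_subset
  have hEfin : A E < ⊤ := lt_of_le_of_lt (measure_mono hEQ) hQfin
  set a := (A Q).toReal with ha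
  set e := (A E).toReal with he
  have hfa : (A F).toReal = a - e := by
    rw [hFdef, measure_diff hEQ hEm.nullMeasurableSet hEfin.ne,
      ENNReal.toReal_sub_of_le (measure_mono hEQ) hQfin.ne]
  have ha0 : 0 < a := ENNReal.toReal_pos hQpos.ne' hQfin.ne
  have he0 : 0 ≤ e := ENNReal.toReal_nonneg
  have hwintF : IntegrableOn w F A := hwint.mono_set hFQ
  have hwinvF : IntegrableOn (fun x => (w x)⁻¹) F A := hwinv.mono_set hFQ
  have hwposF : ∀ᵐ x ∂(A.restrict F), 0 < w x :=
    ae_restrict_of_ae_restrict_of_subset hFQ hwpos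
  set IQ := ∫ x in Q, w x ∂A with hIQ
  set IE := ∫ x in E, w x ∂A with hIE
  set IF := ∫ x in F, w x ∂A with hIF
  set JQ := ∫ x in Q, (w x)⁻¹ ∂A with hJQ
  set JF := ∫ x in F, (w x)⁻¹ ∂A with hJF
  -- Cauchy-Schwarz on F
  have hCS : (A F).toReal ^ 2 ≤ IF * JF := by
    have := cs_aux (A.restrict F) w hwposF hwintF hwinvF
    simpa [Measure.restrict_apply_univ] using this
  -- JF ≤ JQ
  have hwinvnn : 0 ≤ᵐ[A.restrict Q] fun x => (w x)⁻¹ := by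
    filter_upwards [hwpos] with x hx; exact inv_nonneg.2 hx.le
  have hJFQ : JF ≤ JQ :=
    setIntegral_mono_set hwinv hwinvnn (Filter.Eventually.of_forall hFQ)
  have hIF0 : 0 ≤ IF := setIntegral_nonneg_of_ae_restrict
    (by filter_upwards [hwposF] with x hx; exact hx.le)
  have hJF0 : 0 ≤ JF := setIntegral_nonneg_of_ae_restrict
    (by filter_upwards [hwposF] with x hx; exact inv_nonneg.2 hx.le)
  -- splitting the integral
  have hsplit : IF = IQ - IE := by
    rw [hIF, hFdef, integral_diff hEm hwint hEQ]
  -- IQ > 0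
  have hIQpos : 0 < IQ := by
    rw [hIQ]
    refine (integral_pos_iff_support_of_nonneg_ae ?_ hwint).2 ?_
    · filter_upwards [hwpos] with x hx; exact hx.le
    · have hsub : (Function.support w)ᶜ ⊆ {x | ¬ 0 < w x} := by
        intro x hx
        simp only [Function.mem_support, not_not, Set.mem_compl_iff] at hx
        simp [hx]
      have hnull : (A.restrict Q) (Function.support w)ᶜ = 0 :=
        measure_mono_null hsub hwpos
      have : (A.restrict Q) Set.univ ≤ (A.restrict Q) (Function.support w) := by
        calc (A.restrict Q) Set.univ
            ≤ (A.restrict Q) (Function.support w) + (A.restrict Q) (Function.support w)ᶜ := by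
              rw [← Set.union_compl_self (Function.support w)] at *
              exact measure_union_le _ _
          _ = (A.restrict Q) (Function.support w) := by rw [hnull, add_zero]
      refine lt_of_lt_of_le ?_ this
      rwa [Measure.restrict_apply_univ]
  have hC0 : 0 < C := lt_of_lt_of_le one_pos hC
  -- combine
  have h1 : ((1 - δ) * a) ^ 2 ≤ IF * JQ := by
    have hae : (1 - δ) * a ≤ a - e := by nlinarith
    have hnn : 0 ≤ (1 - δ) * a := by nlinarith
    calc ((1 - δ) * a) ^ 2 ≤ (a - e) ^ 2 := by nlinarith
      _ = (A F).toReal ^ 2 := by rw [hfa]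
      _ ≤ IF * JF := hCS
      _ ≤ IF * JQ := mul_le_mul_of_nonneg_left hJFQ hIF0
  have key : (1 - δ) ^ 2 * IQ ≤ C * IF := by
    have h1' : ((1 - δ) * a) ^ 2 * IQ ≤ (IF * JQ) * IQ :=
      mul_le_mul_of_nonneg_right h1 hIQpos.le
    have h2' : IF * (IQ * JQ) ≤ IF * (C * a ^ 2) :=
      mul_le_mul_of_nonneg_left hA2 hIF0
    have ha2 : (0:ℝ) < a ^ 2 := pow_pos ha0 2
    have hfin : (1 - δ) ^ 2 * IQ * a ^ 2 ≤ C * IF * a ^ 2 := by nlinarith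
    exact le_of_mul_le_mul_right hfin ha2
  have hmain : (1 - δ) ^ 2 / C * IQ ≤ IF := by
    rw [div_mul_eq_mul_div, div_le_iff₀ hC0]
    nlinarith
  nlinarith [hsplit, hmain]
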